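/- arXiv:2210.00533 — 2 statements merged into one kernel-verified Lean document; each statement's English description precedes it below -/
import Mathlib

section
/- Fix n ≥ 1 and strategies (σ,μ,τ), let T be uniformly distributed on {1,…,n} and independent of (U^n,M_1,M_2,V^n) ~ P^{σμτ}, and set U = U_T, W_1 = (M_1,T), W_2 = (M_2,T), V = V_T. Then the joint law of (U,W_1,W_2,V) factorizes as P^{σμτ}_{U W_1 W_2 V} = P_U · P^σ_{W_1|U} · P^μ_{W_2|W_1} · P^τ_{V|W_2}; i.e., for every (u,w_1,w_2,v) for which the conditional probabilities are defined, P(u,w_1,w_2,v) = P_U(u) · P(w_1|u) · P(w_2|w_1) · P(v|w_2), where the conditionals are those induced by the joint law itself. -/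
/-!
Strategic communication via a cascade multiple-description network
(Bou Rouphael & Le Treust).

STATEMENT 7: factorization of the induced single-letter law.
-/

open Finset Filter

/-- A probability distribution on a finite alphabet. -/
structure FDist (α : Type) [Fintype α] where
  p : α → ℝ
  nonneg : ∀ a, 0 ≤ p a
  sum_one : ∑ a, p a = 1

/-- The message alphabet `{1, …, 2^⌊nR⌋}`. -/
abbrev Msg (n : ℕ) (R : ℝ) : Type := Fin (2 ^ ⌊(n : ℝ) * R⌋₊)

section NLetter

variable {U V : Type} [Fintype U] [Fintype V]

/-- The joint law `P^{σμτ}(uⁿ, m₁, m₂, vⁿ)` induced by the source and the strategies. -/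
noncomputable def jointN {n : ℕ} {R1 R2 : ℝ} (PU : FDist U)
    (σ : (Fin n → U) → FDist (Msg n R1))
    (μ : Msg n R1 → FDist (Msg n R2))
    (τ : Msg n R2 → FDist (Fin n → V))
    (un : Fin n → U) (m1 : Msg n R1) (m2 : Msg n R2) (vn : Fin n → V) : ℝ :=
  (∏ t, PU.p (un t)) * (σ un).p m1 * (μ m1).p m2 * (τ m2).p vn

/-- The long-run cost `cⁿ(σ,μ,τ) = E[(1/n) ∑_t c(U_t, V_t)]`. -/
noncomputable def costN {n : ℕ} {R1 R2 : ℝ} (PU : FDist U)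
    (σ : (Fin n → U) → FDist (Msg n R1))
    (μ : Msg n R1 → FDist (Msg n R2))
    (τ : Msg n R2 → FDist (Fin n → V))
    (c : U → V → ℝ) : ℝ :=
  ∑ un : Fin n → U, ∑ m1 : Msg n R1, ∑ m2 : Msg n R2, ∑ vn : Fin n → V,
    jointN PU σ μ τ un m1 m2 vn * ((n : ℝ)⁻¹ * ∑ t, c (un t) (vn t))

/-- Best-response set `𝔸₃(σ,μ)` of the decoder. -/
noncomputable def A3 {n : ℕ} {R1 R2 : ℝ} (PU : FDist U) (c3 : U → V → ℝ)
    (σ : (Fin n → U) → FDist (Msg n R1))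
    (μ : Msg n R1 → FDist (Msg n R2)) :
    Set (Msg n R2 → FDist (Fin n → V)) :=
  {τ | ∀ τ', costN PU σ μ τ c3 ≤ costN PU σ μ τ' c3}

/-- Best-response set `𝔸₂(σ)` of the relay (pairs `(μ,τ)` with `τ ∈ 𝔸₃(σ,μ)`
minimizing the relay cost). -/
noncomputable def A2 {n : ℕ} {R1 R2 : ℝ} (PU : FDist U) (c2 c3 : U → V → ℝ)
    (σ : (Fin n → U) → FDist (Msg n R1)) :
    Set ((Msg n R1 → FDist (Msg n R2)) × (Msg n R2 → FDist (Fin n → V))) :=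
  {mt | mt.2 ∈ A3 PU c3 σ mt.1 ∧
    ∀ mt' : (Msg n R1 → FDist (Msg n R2)) × (Msg n R2 → FDist (Fin n → V)),
      mt'.2 ∈ A3 PU c3 σ mt'.1 →
        costN PU σ mt.1 mt.2 c2 ≤ costN PU σ mt'.1 mt'.2 c2}

/-- The encoder's n-letter optimal cost
`Γₑⁿ(R₁,R₂) = inf_σ max_{(μ,τ) ∈ 𝔸₂(σ)} c₁ⁿ(σ,μ,τ)`. -/
noncomputable def GammaN (PU : FDist U) (c1 c2 c3 : U → V → ℝ)
    (n : ℕ) (R1 R2 : ℝ) : ℝ :=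
  sInf {x | ∃ σ : (Fin n → U) → FDist (Msg n R1),
    x = sSup ((fun mt => costN PU σ mt.1 mt.2 c1) '' A2 (R2 := R2) PU c2 c3 σ)}

end NLetter


section SingleLetterization

variable {U V : Type} [Fintype U] [DecidableEq U] [Fintype V] [DecidableEq V]
variable {n : ℕ} {R1 R2 : ℝ}

/-- The induced single-letter joint law `P^{σμτ}_{U W₁ W₂ V}` of
`U = U_T`, `W₁ = (M₁,T)`, `W₂ = (M₂,T)`, `V = V_T`, where `T` is uniform on
`{1,…,n}` and independent of `(Uⁿ,M₁,M₂,Vⁿ) ∼ P^{σμτ}`. -/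
noncomputable def jointSL (PU : FDist U)
    (σ : (Fin n → U) → FDist (Msg n R1))
    (μ : Msg n R1 → FDist (Msg n R2))
    (τ : Msg n R2 → FDist (Fin n → V))
    (u : U) (w1 : Msg n R1 × Fin n) (w2 : Msg n R2 × Fin n) (v : V) : ℝ :=
  ∑ un : Fin n → U, ∑ vn : Fin n → V,
    if w2.2 = w1.2 ∧ un w1.2 = u ∧ vn w1.2 = v
    then (n : ℝ)⁻¹ * jointN PU σ μ τ un w1.1 w2.1 vn else 0

variable (PU : FDist U)
    (σ : (Fin n → U) → FDist (Msg n R1))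
    (μ : Msg n R1 → FDist (Msg n R2))
    (τ : Msg n R2 → FDist (Fin n → V))

/-- Marginal of `P^{σμτ}_{U W₁ W₂ V}` on `U`. -/
noncomputable def margU (u : U) : ℝ :=
  ∑ w1, ∑ w2, ∑ v, jointSL PU σ μ τ u w1 w2 v

/-- Marginal of `P^{σμτ}_{U W₁ W₂ V}` on `W₁`. -/
noncomputable def margW1 (w1 : Msg n R1 × Fin n) : ℝ :=
  ∑ u, ∑ w2, ∑ v, jointSL PU σ μ τ u w1 w2 v

/-- Marginal of `P^{σμτ}_{U W₁ W₂ V}` on `W₂`. -/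
noncomputable def margW2 (w2 : Msg n R2 × Fin n) : ℝ :=
  ∑ u, ∑ w1, ∑ v, jointSL PU σ μ τ u w1 w2 v

/-- Marginal of `P^{σμτ}_{U W₁ W₂ V}` on `(U,W₁)`. -/
noncomputable def margUW1 (u : U) (w1 : Msg n R1 × Fin n) : ℝ :=
  ∑ w2, ∑ v, jointSL PU σ μ τ u w1 w2 v

/-- Marginal of `P^{σμτ}_{U W₁ W₂ V}` on `(W₁,W₂)`. -/
noncomputable def margW1W2 (w1 : Msg n R1 × Fin n) (w2 : Msg n R2 × Fin n) : ℝ :=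
  ∑ u, ∑ v, jointSL PU σ μ τ u w1 w2 v

/-- Marginal of `P^{σμτ}_{U W₁ W₂ V}` on `(W₂,V)`. -/
noncomputable def margW2V (w2 : Msg n R2 × Fin n) (v : V) : ℝ :=
  ∑ u, ∑ w1, jointSL PU σ μ τ u w1 w2 v

/-- Marginal of `P^{σμτ}_{U W₁ W₂ V}` on `(U,W₁,W₂)`. -/
noncomputable def margUW1W2 (u : U) (w1 : Msg n R1 × Fin n)
    (w2 : Msg n R2 × Fin n) : ℝ :=
  ∑ v, jointSL PU σ μ τ u w1 w2 v

/-- Marginal of `P^{σμτ}_{U W₁ W₂ V}` on `(W₁,W₂,V)`. -/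
noncomputable def margW1W2V (w1 : Msg n R1 × Fin n) (w2 : Msg n R2 × Fin n)
    (v : V) : ℝ :=
  ∑ u, jointSL PU σ μ τ u w1 w2 v

end SingleLetterization

section Aux

variable {U V : Type} [Fintype U] [DecidableEq U] [Fintype V] [DecidableEq V]
variable {n : ℕ} {R1 R2 : ℝ}
variable (PU : FDist U)
    (σ : (Fin n → U) → FDist (Msg n R1))
    (μ : Msg n R1 → FDist (Msg n R2))
    (τ : Msg n R2 → FDist (Fin n → V))

/-- `P^σ(un t = u, M₁ = m₁)`. -/
noncomputable def auxA (u : U) (m1 : Msg n R1) (t : Fin n) : ℝ :=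
  ∑ un : Fin n → U, if un t = u then (∏ s, PU.p (un s)) * (σ un).p m1 else 0

/-- `P^τ(vn t = v | M₂ = m₂)`. -/
noncomputable def auxB (m2 : Msg n R2) (v : V) (t : Fin n) : ℝ :=
  ∑ vn : Fin n → V, if vn t = v then (τ m2).p vn else 0

/-- `P^σ(M₁ = m₁)`. -/
noncomputable def auxS (m1 : Msg n R1) : ℝ :=
  ∑ un : Fin n → U, (∏ s, PU.p (un s)) * (σ un).p m1

/-- `P^{σμ}(M₂ = m₂)`. -/
noncomputable def auxT (m2 : Msg n R2) : ℝ :=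
  ∑ m1, auxS PU σ m1 * (μ m1).p m2

lemma jointSL_eq (u : U) (w1 : Msg n R1 × Fin n) (w2 : Msg n R2 × Fin n) (v : V) :
    jointSL PU σ μ τ u w1 w2 v
      = if w2.2 = w1.2
        then (n : ℝ)⁻¹ * auxA PU σ u w1.1 w1.2 * (μ w1.1).p w2.1
              * auxB τ w2.1 v w1.2
        else 0 := by
  by_cases h : w2.2 = w1.2
  · simp only [jointSL, jointN, h, if_pos, true_and]
    have inner : ∀ un : Fin n → U,
        (∑ vn : Fin n → V, if un w1.2 = u ∧ vn w1.2 = v then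
            (n : ℝ)⁻¹ * ((∏ t, PU.p (un t)) * (σ un).p w1.1 * (μ w1.1).p w2.1
              * (τ w2.1).p vn) else 0)
          = if un w1.2 = u then
              (n : ℝ)⁻¹ * ((∏ t, PU.p (un t)) * (σ un).p w1.1) * (μ w1.1).p w2.1
                * auxB τ w2.1 v w1.2 else 0 := by
      intro un
      by_cases h1 : un w1.2 = u
      · simp only [h1, true_and, if_pos]
        rw [auxB, Finset.mul_sum]
        refine Finset.sum_congr rfl fun vn _ => ?_
        by_cases h2 : vn w1.2 = v
        · simp only [h2, if_pos]; ring
        · simp [h2]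
      · simp [h1]
    simp only [inner]
    rw [auxA, Finset.mul_sum, Finset.sum_mul, Finset.sum_mul]
    refine Finset.sum_congr rfl fun un _ => ?_
    by_cases h1 : un w1.2 = u
    · simp only [h1, if_pos]; try ring
    · simp [h1]
  · simp [jointSL, h]

lemma sum_auxB (m2 : Msg n R2) (t : Fin n) : ∑ v, auxB τ m2 v t = 1 := by
  simp only [auxB]
  rw [Finset.sum_comm]
  simp only [Finset.sum_ite_eq, Finset.mem_univ, if_pos]
  exact (τ m2).sum_one

lemma sum_auxA (m1 : Msg n R1) (t : Fin n) : ∑ u, auxA PU σ u m1 t = auxS PU σ m1 := by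
  simp only [auxA, auxS]
  rw [Finset.sum_comm]
  simp only [Finset.sum_ite_eq, Finset.mem_univ, if_pos]

lemma sum_auxA_m1 (u : U) (t : Fin n) :
    ∑ m1, auxA PU σ u m1 t = PU.p u := by
  simp only [auxA]
  rw [Finset.sum_comm]
  have step : ∀ un : Fin n → U,
      (∑ m1, if un t = u then (∏ s, PU.p (un s)) * (σ un).p m1 else 0)
        = if un t = u then (∏ s, PU.p (un s)) else 0 := by
    intro un
    by_cases h : un t = u
    · simp [h, ← Finset.mul_sum, (σ un).sum_one]
    · simp [h]
  simp only [step]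
  have key : (∑ un : Fin n → U, if un t = u then (∏ s, PU.p (un s)) else 0)
      = ∏ s : Fin n, ∑ a : U, (if s = t then (if a = u then PU.p a else 0) else PU.p a) := by
    rw [Fintype.prod_sum]
    refine Finset.sum_congr rfl fun un _ => ?_
    by_cases h : un t = u
    · rw [if_pos h]
      refine Finset.prod_congr rfl fun s _ => ?_
      by_cases hs : s = t
      · subst hs; simp [h]
      · simp [hs]
    · rw [if_neg h, eq_comm]
      refine Finset.prod_eq_zero (Finset.mem_univ t) ?_
      simp [h]
  rw [key]
  have : ∀ s : Fin n, (∑ a : U, if s = t then (if a = u then PU.p a else 0) else PU.p a)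
      = if s = t then PU.p u else 1 := by
    intro s
    by_cases hs : s = t
    · simp [hs]
    · simp [hs, PU.sum_one]
  simp only [this, Finset.prod_ite_eq', Finset.mem_univ, if_pos]

lemma margUW1_eq (u : U) (w1 : Msg n R1 × Fin n) :
    margUW1 PU σ μ τ u w1 = (n : ℝ)⁻¹ * auxA PU σ u w1.1 w1.2 := by
  simp only [margUW1, jointSL_eq]
  rw [Fintype.sum_prod_type]
  have : ∀ m2 : Msg n R2,
      (∑ t2 : Fin n, ∑ v : V, if ((m2, t2) : Msg n R2 × Fin n).2 = w1.2
          then (n : ℝ)⁻¹ * auxA PU σ u w1.1 w1.2 * (μ w1.1).p m2 * auxB τ m2 v w1.2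
          else 0)
        = (n : ℝ)⁻¹ * auxA PU σ u w1.1 w1.2 * (μ w1.1).p m2 := by
    intro m2
    simp only []
    rw [Finset.sum_comm]
    simp only [Finset.sum_ite_eq', Finset.mem_univ, if_pos, ← Finset.mul_sum,
      sum_auxB, mul_one]
  simp only [this, ← Finset.mul_sum, (μ w1.1).sum_one, mul_one]

lemma margU_eq (hn : 1 ≤ n) (u : U) : margU PU σ μ τ u = PU.p u := by
  have h : margU PU σ μ τ u = ∑ w1, margUW1 PU σ μ τ u w1 := rfl
  rw [h]
  simp only [margUW1_eq]
  rw [Fintype.sum_prod_type_right]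
  simp only [← Finset.mul_sum, sum_auxA_m1, Finset.sum_const, Finset.card_univ,
    Fintype.card_fin, nsmul_eq_mul]
  rw [← mul_assoc, inv_mul_cancel₀ (by positivity : (n : ℝ) ≠ 0), one_mul]

lemma margW1_eq (w1 : Msg n R1 × Fin n) :
    margW1 PU σ μ τ w1 = (n : ℝ)⁻¹ * auxS PU σ w1.1 := by
  have h : margW1 PU σ μ τ w1 = ∑ u, margUW1 PU σ μ τ u w1 := rfl
  rw [h]
  simp only [margUW1_eq, ← Finset.mul_sum, sum_auxA]

lemma margW1W2_eq (w1 : Msg n R1 × Fin n) (w2 : Msg n R2 × Fin n) :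
    margW1W2 PU σ μ τ w1 w2
      = if w2.2 = w1.2 then (n : ℝ)⁻¹ * auxS PU σ w1.1 * (μ w1.1).p w2.1 else 0 := by
  simp only [margW1W2, jointSL_eq]
  by_cases h : w2.2 = w1.2
  · simp only [h, if_pos]
    rw [Finset.sum_comm]
    have : ∀ u : U, (∑ v : V,
        (n : ℝ)⁻¹ * auxA PU σ u w1.1 w1.2 * (μ w1.1).p w2.1 * auxB τ w2.1 v w1.2)
          = (n : ℝ)⁻¹ * auxA PU σ u w1.1 w1.2 * (μ w1.1).p w2.1 := by
      intro u
      rw [← Finset.mul_sum, sum_auxB, mul_one]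
    rw [Finset.sum_comm]
    simp only [this]
    rw [← Finset.sum_mul, ← Finset.mul_sum, sum_auxA]
  · simp [h]

lemma margW2_eq (w2 : Msg n R2 × Fin n) :
    margW2 PU σ μ τ w2 = (n : ℝ)⁻¹ * auxT PU σ μ w2.1 := by
  have h : margW2 PU σ μ τ w2 = ∑ w1, margW1W2 PU σ μ τ w1 w2 := by
    simp only [margW2, margW1W2]
    rw [Finset.sum_comm]
  rw [h]
  simp only [margW1W2_eq]
  rw [Fintype.sum_prod_type]
  have : ∀ m1 : Msg n R1,
      (∑ t1 : Fin n, if w2.2 = ((m1, t1) : Msg n R1 × Fin n).2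
          then (n : ℝ)⁻¹ * auxS PU σ m1 * (μ m1).p w2.1 else 0)
        = (n : ℝ)⁻¹ * auxS PU σ m1 * (μ m1).p w2.1 := by
    intro m1
    simp only [Finset.sum_ite_eq, Finset.mem_univ, if_pos]
  simp only [this, auxT, Finset.mul_sum]
  refine Finset.sum_congr rfl fun m1 _ => ?_
  ring

lemma margW2V_eq (w2 : Msg n R2 × Fin n) (v : V) :
    margW2V PU σ μ τ w2 v
      = (n : ℝ)⁻¹ * auxT PU σ μ w2.1 * auxB τ w2.1 v w2.2 := by
  simp only [margW2V, jointSL_eq]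
  rw [Finset.sum_comm]
  rw [Fintype.sum_prod_type]
  have : ∀ m1 : Msg n R1,
      (∑ t1 : Fin n, ∑ u : U, if w2.2 = ((m1, t1) : Msg n R1 × Fin n).2
          then (n : ℝ)⁻¹ * auxA PU σ u m1 t1 * (μ m1).p w2.1 * auxB τ w2.1 v t1
          else 0)
        = (n : ℝ)⁻¹ * auxS PU σ m1 * (μ m1).p w2.1 * auxB τ w2.1 v w2.2 := by
    intro m1
    have step : ∀ t1 : Fin n, (∑ u : U, if w2.2 = t1
        then (n : ℝ)⁻¹ * auxA PU σ u m1 t1 * (μ m1).p w2.1 * auxB τ w2.1 v t1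
        else 0)
          = if w2.2 = t1
            then (n : ℝ)⁻¹ * auxS PU σ m1 * (μ m1).p w2.1 * auxB τ w2.1 v t1
            else 0 := by
      intro t1
      by_cases h : w2.2 = t1
      · simp only [h, if_pos]
        rw [← sum_auxA PU σ m1 t1, Finset.mul_sum, Finset.sum_mul, Finset.sum_mul]
      · simp [h]
    simp only [step, Finset.sum_ite_eq, Finset.mem_univ, if_pos]
  simp only [this, ← Finset.sum_mul, ← Finset.mul_sum]
  rw [auxT, Finset.mul_sum, Finset.sum_mul, Finset.sum_mul]
  exact Finset.sum_congr rfl fun m1 _ => by ring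

end Aux

/-- **Factorization of the induced single-letter law.** For `n ≥ 1` and
strategies `(σ,μ,τ)`, with `U = U_T`, `W₁ = (M₁,T)`, `W₂ = (M₂,T)`, `V = V_T`,
the joint law factorizes as
`P^{σμτ}_{U W₁ W₂ V} = P_U · P^σ_{W₁|U} · P^μ_{W₂|W₁} · P^τ_{V|W₂}`: for every
`(u,w₁,w₂,v)` at which the conditionals (induced by the joint law itself) are
defined, `P(u,w₁,w₂,v) = P_U(u)·P(w₁|u)·P(w₂|w₁)·P(v|w₂)`. -/
theorem cascade_singleletter_factorization
    {U V : Type} [Fintype U] [DecidableEq U] [Nonempty U]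
    [Fintype V] [DecidableEq V] [Nonempty V]
    {n : ℕ} (hn : 1 ≤ n) {R1 R2 : ℝ} (PU : FDist U)
    (σ : (Fin n → U) → FDist (Msg n R1))
    (μ : Msg n R1 → FDist (Msg n R2))
    (τ : Msg n R2 → FDist (Fin n → V)) :
    ∀ (u : U) (w1 : Msg n R1 × Fin n) (w2 : Msg n R2 × Fin n) (v : V),
      margU PU σ μ τ u ≠ 0 → margW1 PU σ μ τ w1 ≠ 0 → margW2 PU σ μ τ w2 ≠ 0 →
        jointSL PU σ μ τ u w1 w2 v
          = PU.p u * (margUW1 PU σ μ τ u w1 / margU PU σ μ τ u)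
              * (margW1W2 PU σ μ τ w1 w2 / margW1 PU σ μ τ w1)
              * (margW2V PU σ μ τ w2 v / margW2 PU σ μ τ w2) := by
  intro u w1 w2 v hU hW1 hW2
  have hn' : (n : ℝ) ≠ 0 := by positivity
  rw [margU_eq PU σ μ τ hn] at hU ⊢
  rw [margW1_eq] at hW1 ⊢
  rw [margW2_eq] at hW2 ⊢
  have hS : auxS PU σ w1.1 ≠ 0 := fun h => hW1 (by rw [h, mul_zero])
  have hT : auxT PU σ μ w2.1 ≠ 0 := fun h => hW2 (by rw [h, mul_zero])
  rw [jointSL_eq, margUW1_eq, margW1W2_eq, margW2V_eq]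
  by_cases h : w2.2 = w1.2
  · simp only [h, if_pos]
    field_simp
  · simp [h]
end

section
/- Fix n ≥ 1 and strategies (σ,μ) of the encoder and relay, and let T be uniformly distributed on {1,…,n} and independent of (U^n,M_1,M_2) under the law induced by P_U, σ, μ. Then the minimal n-letter decoder cost equals the minimal single-letter cost: min over decoder strategies τ of c_3^n(σ,μ,τ) equals the minimum over families of conditional distributions Q : {1,…,2^⌊nR_2⌋} × {1,…,n} → Δ(𝒱) of E[c_3(U_T,V)], where V is drawn according to Q(·|M_2,T). -/
/-!
Strategic communication via a cascade multiple-description network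
(Bou Rouphael & Le Treust).

STATEMENT 10: the minimal n-letter decoder cost equals the minimal
single-letter decoder cost.
-/

open Finset Filter

/-- The product decoder strategy built from a family of per-letter
distributions: `τ*(vⁿ|m₂) = ∏_t Q(v_t | m₂, t)`. -/
noncomputable def prodFDist {n : ℕ} {V : Type} [Fintype V]
    (d : Fin n → FDist V) : FDist (Fin n → V) where
  p := fun f => ∏ t, (d t).p (f t)
  nonneg := fun f => Finset.prod_nonneg (fun t _ => (d t).nonneg (f t))
  sum_one := by
    have h := Finset.prod_univ_sum (fun _ : Fin n => (Finset.univ : Finset V))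
      (fun t v => (d t).p v)
    rw [Fintype.piFinset_univ] at h
    rw [← h]
    simp [FDist.sum_one]

section SLDecoder

variable {U V : Type} [Fintype U] [Fintype V]
variable {n : ℕ} {R1 R2 : ℝ}

/-- The law `P^{σμ}(uⁿ, m₁, m₂)` induced by the source, the encoder and the
relay (no decoder). -/
noncomputable def jointNoDec (PU : FDist U)
    (σ : (Fin n → U) → FDist (Msg n R1))
    (μ : Msg n R1 → FDist (Msg n R2))
    (un : Fin n → U) (m1 : Msg n R1) (m2 : Msg n R2) : ℝ :=
  (∏ t, PU.p (un t)) * (σ un).p m1 * (μ m1).p m2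

/-- The expected single-letter decoder cost `E[c₃(U_T, V)]`, where `T` is
uniform on `{1,…,n}`, independent of `(Uⁿ,M₁,M₂)`, and `V ∼ Q(·|M₂,T)`. -/
noncomputable def costSLDec (PU : FDist U)
    (σ : (Fin n → U) → FDist (Msg n R1))
    (μ : Msg n R1 → FDist (Msg n R2))
    (Q : Msg n R2 × Fin n → FDist V) (c3 : U → V → ℝ) : ℝ :=
  ∑ un : Fin n → U, ∑ m1 : Msg n R1, ∑ m2 : Msg n R2,
    jointNoDec PU σ μ un m1 m2
      * ((n : ℝ)⁻¹ * ∑ t, ∑ v, (Q (m2, t)).p v * c3 (un t) v)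

end SLDecoder

section Aux

variable {U V : Type} [Fintype U] [Fintype V]
variable {n : ℕ} {R1 R2 : ℝ}

open Classical in
/-- Marginal of a distribution on `Fin n → V` at coordinate `t`. -/
noncomputable def margFDist (d : FDist (Fin n → V)) (t : Fin n) : FDist V where
  p := fun v => ∑ vn : Fin n → V, if vn t = v then d.p vn else 0
  nonneg := fun v => Finset.sum_nonneg fun vn _ => by
    split <;> simp [d.nonneg]
  sum_one := by
    rw [Finset.sum_comm]
    simp [d.sum_one]

open Classical in
lemma marg_sum (d : FDist (Fin n → V)) (t : Fin n) (c : V → ℝ) :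
    ∑ v, (margFDist d t).p v * c v = ∑ vn, d.p vn * c (vn t) := by
  simp only [margFDist, Finset.sum_mul]
  rw [Finset.sum_comm]
  refine Finset.sum_congr rfl fun vn _ => ?_
  simp only [ite_mul, zero_mul]
  rw [Finset.sum_ite_eq Finset.univ (vn t) (fun v => d.p vn * c v)]
  simp

lemma key_prod_sum (p : Fin n → V → ℝ) (hp : ∀ s, ∑ v, p s v = 1)
    (t : Fin n) (c : V → ℝ) :
    ∑ vn : Fin n → V, (∏ s, p s (vn s)) * c (vn t) = ∑ v, p t v * c v := by
  have h1 : ∀ vn : Fin n → V,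
      (∏ s, p s (vn s)) * c (vn t)
        = ∏ s, (p s (vn s) * (if s = t then c (vn s) else 1)) := by
    intro vn
    rw [Finset.prod_mul_distrib, Finset.prod_ite_eq' Finset.univ t
      (fun s => c (vn s))]
    simp
  simp only [h1]
  have h2 := Finset.prod_univ_sum (fun _ : Fin n => (Finset.univ : Finset V))
    (fun s v => p s v * (if s = t then c v else 1))
  rw [Fintype.piFinset_univ] at h2
  rw [← h2]
  rw [Finset.prod_eq_single t]
  · simp
  · intro s _ hs
    simp [hs, hp s]
  · simp

lemma costN_prod (PU : FDist U)
    (σ : (Fin n → U) → FDist (Msg n R1))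
    (μ : Msg n R1 → FDist (Msg n R2))
    (Q : Msg n R2 × Fin n → FDist V) (c3 : U → V → ℝ) :
    costN PU σ μ (fun m2 => prodFDist (fun t => Q (m2, t))) c3
      = costSLDec PU σ μ Q c3 := by
  unfold costN costSLDec jointN jointNoDec
  refine Finset.sum_congr rfl fun un _ => Finset.sum_congr rfl fun m1 _ =>
    Finset.sum_congr rfl fun m2 _ => ?_
  have hkey : ∀ t : Fin n,
      ∑ vn : Fin n → V, (∏ s, (Q (m2, s)).p (vn s)) * c3 (un t) (vn t)
        = ∑ v, (Q (m2, t)).p v * c3 (un t) v := fun t =>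
    key_prod_sum (fun s => (Q (m2, s)).p) (fun s => (Q (m2, s)).sum_one) t _
  calc ∑ vn : Fin n → V,
        ((∏ t, PU.p (un t)) * (σ un).p m1 * (μ m1).p m2
            * (prodFDist fun t => Q (m2, t)).p vn)
          * ((n : ℝ)⁻¹ * ∑ t, c3 (un t) (vn t))
      = ∑ vn : Fin n → V,
          ((∏ t, PU.p (un t)) * (σ un).p m1 * (μ m1).p m2 * (n : ℝ)⁻¹)
            * ∑ t, (∏ s, (Q (m2, s)).p (vn s)) * c3 (un t) (vn t) := by
        refine Finset.sum_congr rfl fun vn _ => ?_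
        simp only [prodFDist, Finset.mul_sum]
        refine Finset.sum_congr rfl fun t _ => ?_
        ring
    _ = ((∏ t, PU.p (un t)) * (σ un).p m1 * (μ m1).p m2 * (n : ℝ)⁻¹)
          * ∑ t, ∑ vn : Fin n → V,
              (∏ s, (Q (m2, s)).p (vn s)) * c3 (un t) (vn t) := by
        rw [← Finset.mul_sum, Finset.sum_comm]
    _ = ((∏ t, PU.p (un t)) * (σ un).p m1 * (μ m1).p m2 * (n : ℝ)⁻¹)
          * ∑ t, ∑ v, (Q (m2, t)).p v * c3 (un t) v := by
        rw [Finset.sum_congr rfl fun t _ => hkey t]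
    _ = (∏ t, PU.p (un t)) * (σ un).p m1 * (μ m1).p m2
          * ((n : ℝ)⁻¹ * ∑ t, ∑ v, (Q (m2, t)).p v * c3 (un t) v) := by
        ring

lemma costSL_marg (PU : FDist U)
    (σ : (Fin n → U) → FDist (Msg n R1))
    (μ : Msg n R1 → FDist (Msg n R2))
    (τ : Msg n R2 → FDist (Fin n → V)) (c3 : U → V → ℝ) :
    costSLDec PU σ μ (fun p => margFDist (τ p.1) p.2) c3
      = costN PU σ μ τ c3 := by
  unfold costN costSLDec jointN jointNoDec
  refine Finset.sum_congr rfl fun un _ => Finset.sum_congr rfl fun m1 _ =>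
    Finset.sum_congr rfl fun m2 _ => ?_
  have h1 : ∀ t : Fin n, ∑ v, (margFDist (τ m2) t).p v * c3 (un t) v
      = ∑ vn, (τ m2).p vn * c3 (un t) (vn t) := fun t =>
    marg_sum (τ m2) t (c3 (un t))
  calc (∏ t, PU.p (un t)) * (σ un).p m1 * (μ m1).p m2
        * ((n : ℝ)⁻¹ * ∑ t, ∑ v, (margFDist (τ m2) t).p v * c3 (un t) v)
      = ((∏ t, PU.p (un t)) * (σ un).p m1 * (μ m1).p m2 * (n : ℝ)⁻¹)
          * ∑ t, ∑ vn : Fin n → V, (τ m2).p vn * c3 (un t) (vn t) := by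
        rw [Finset.sum_congr rfl fun t _ => h1 t]
        ring
    _ = ∑ vn : Fin n → V,
          ((∏ t, PU.p (un t)) * (σ un).p m1 * (μ m1).p m2 * (n : ℝ)⁻¹)
            * ∑ t, (τ m2).p vn * c3 (un t) (vn t) := by
        rw [← Finset.mul_sum, Finset.sum_comm]
    _ = ∑ vn : Fin n → V,
          ((∏ t, PU.p (un t)) * (σ un).p m1 * (μ m1).p m2 * (τ m2).p vn)
            * ((n : ℝ)⁻¹ * ∑ t, c3 (un t) (vn t)) := by
        refine Finset.sum_congr rfl fun vn _ => ?_
        simp only [Finset.mul_sum]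
        refine Finset.sum_congr rfl fun t _ => ?_
        ring

end Aux

/-- **Single-letterization of the optimal decoder cost.** Fix `n ≥ 1` and
strategies `(σ,μ)`, and let `T` be uniform on `{1,…,n}`, independent of
`(Uⁿ,M₁,M₂)`. The minimal n-letter decoder cost equals the minimal
single-letter cost:
`min_τ c₃ⁿ(σ,μ,τ) = min_Q E[c₃(U_T,V)]` where `V ∼ Q(·|M₂,T)` and `Q` ranges
over families of conditional distributions `{1,…,2^⌊nR₂⌋} × {1,…,n} → Δ(𝒱)`. -/
theorem cascade_min_decoder_cost_singleletter
    {U V : Type} [Fintype U] [Nonempty U] [Fintype V] [Nonempty V]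
    {n : ℕ} (hn : 1 ≤ n) {R1 R2 : ℝ} (PU : FDist U) (c3 : U → V → ℝ)
    (σ : (Fin n → U) → FDist (Msg n R1))
    (μ : Msg n R1 → FDist (Msg n R2)) :
    (⨅ τ : Msg n R2 → FDist (Fin n → V), costN PU σ μ τ c3)
      = ⨅ Q : Msg n R2 × Fin n → FDist V, costSLDec PU σ μ Q c3 := by
  rw [iInf, iInf]
  congr 1
  apply Set.Subset.antisymm
  · rintro x ⟨τ, rfl⟩
    exact ⟨fun p => margFDist (τ p.1) p.2, costSL_marg PU σ μ τ c3⟩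
  · rintro x ⟨Q, rfl⟩
    exact ⟨fun m2 => prodFDist (fun t => Q (m2, t)), costN_prod PU σ μ Q c3⟩
end
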